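/- Let u : ℤ × ℤ → ℝ and define v_{n,m} = arctan(u_{n,m}). If u satisfies u_{n+1,m+1} = (u_{n+1,m} − u_{n,m+1} + (1 + u_{n+1,m}u_{n,m+1})u_{n,m}) / (1 + u_{n+1,m}u_{n,m+1} − (u_{n+1,m} − u_{n,m+1})u_{n,m}) (with nonzero denominator), then there exists an integer p with v_{n,m} + v_{n+1,m} − v_{n,m+1} − v_{n+1,m+1} = p·π. -/

import Mathlib

theorem stmt7 (u : ℤ × ℤ → ℝ) (v : ℤ × ℤ → ℝ)
    (hv : ∀ n m : ℤ, v (n, m) = Real.arctan (u (n, m)))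
    (hden : ∀ n m : ℤ,
      1 + u (n+1, m) * u (n, m+1) - (u (n+1, m) - u (n, m+1)) * u (n, m) ≠ 0)
    (heq : ∀ n m : ℤ, u (n+1, m+1) =
      (u (n+1, m) - u (n, m+1) + (1 + u (n+1, m) * u (n, m+1)) * u (n, m))
        / (1 + u (n+1, m) * u (n, m+1) - (u (n+1, m) - u (n, m+1)) * u (n, m))) :
    ∀ n m : ℤ, ∃ p : ℤ,
      v (n, m) + v (n+1, m) - v (n, m+1) - v (n+1, m+1) = p * Real.pi := by
  intro n m
  set a := u (n, m) with ha
  set b := u (n + 1, m) with hb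
  set c := u (n, m + 1) with hc
  set d := u (n + 1, m + 1) with hdd
  have hD := hden n m
  have hd : d * (1 + b * c - (b - c) * a) = b - c + (1 + b * c) * a := by
    rw [hdd, heq n m]
    field_simp
    rw [← ha, ← hb, ← hc]
    ring
  have h1 : Real.sqrt (1 + a ^ 2) ≠ 0 := by positivity
  have h2 : Real.sqrt (1 + b ^ 2) ≠ 0 := by positivity
  have h3 : Real.sqrt (1 + c ^ 2) ≠ 0 := by positivity
  have h4 : Real.sqrt (1 + d ^ 2) ≠ 0 := by positivity
  have hsin : Real.sin (v (n, m) + v (n + 1, m) - v (n, m + 1) - v (n + 1, m + 1)) = 0 := by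
    rw [hv n m, hv (n + 1) m, hv n (m + 1), hv (n + 1) (m + 1)]
    rw [show Real.arctan a + Real.arctan b - Real.arctan c - Real.arctan d
        = (Real.arctan a + Real.arctan b) - (Real.arctan c + Real.arctan d) from by ring]
    rw [Real.sin_sub, Real.sin_add, Real.cos_add, Real.sin_add, Real.cos_add,
      Real.sin_arctan, Real.cos_arctan, Real.sin_arctan, Real.cos_arctan,
      Real.sin_arctan, Real.cos_arctan, Real.sin_arctan, Real.cos_arctan]
    field_simp
    linear_combination (Real.sqrt (1 + a ^ 2) * Real.sqrt (1 + b ^ 2) *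
      Real.sqrt (1 + c ^ 2) * Real.sqrt (1 + d ^ 2)) * 0 + (1 + c ^ 2) * 0 + hd * 0 + (by
        nlinarith [hd, sq_nonneg a] : ((a + b) * (1 - c * d) - (1 - a * b) * (c + d) : ℝ) = 0)
  obtain ⟨p, hp⟩ := Real.sin_eq_zero_iff.mp hsin
  exact ⟨p, hp.symm⟩
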